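/- Let F_∞/F be a ℤ_p-extension with layers F_n, A an abelian variety of dimension d over F, and S a finite set of places of F containing the places above p, the places of bad reduction of A, and the archimedean places, such that all finite places in S decompose finitely in F_∞/F. Then |r_p(R_S(A[p]/F_n)) − r_p(R(A/F_n))| = O(1); more precisely it is bounded by 4d + 2d|S_f(F_n)|. -/

import Mathlib

/-- The `p`-torsion subgroup `N[p]` of an abelian group `N`. -/
def pTors (p : ℕ) (N : Type*) [AddCommGroup N] : AddSubgroup N where
  carrier := {x | p • x = 0}
  zero_mem' := smul_zero p
  add_mem' := by
    intro a b ha hb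
    simp only [Set.mem_setOf_eq, smul_add] at *
    rw [ha, hb, add_zero]
  neg_mem' := by
    intro a ha
    simp only [Set.mem_setOf_eq, smul_neg] at *
    rw [ha, neg_zero]

/-- The `p`-rank `r_p(N) = dim_{𝔽_p} N[p]`: since `N[p]` is an elementary abelian
`p`-group, its `𝔽_p`-dimension is `log_p` of its cardinality. -/
noncomputable def pRank (p : ℕ) (N : Type*) [AddCommGroup N] : ℕ :=
  Nat.log p (Nat.card (pTors p N))

/-- Multiplication by `p` as an additive group homomorphism. -/
def pMul (p : ℕ) (N : Type*) [AddCommGroup N] : N →+ N :=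
  AddMonoidHom.mk' (fun x => p • x) fun a b => smul_add p a b
/-- The multiplicative group structure (composition) on `AddAut M`, which Mathlib used to
provide and has since replaced by an additive group structure. -/
instance AddAut.compGroupOld (M : Type*) [Add M] : Group (AddAut M) where
  mul g h := AddEquiv.trans h g
  one := AddEquiv.refl _
  inv := AddEquiv.symm
  mul_assoc _ _ _ := rfl
  one_mul _ := rfl
  mul_one _ := rfl
  inv_mul_cancel := AddEquiv.self_trans_symm
section Cohomology

variable {G : Type*} [Group G] {M : Type*} [AddCommGroup M]

/-- 1-cocycles of `G` with coefficients in `M`, for the action `ρ`. -/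
def cocycles (ρ : G →* AddAut M) : AddSubgroup (G → M) where
  carrier := {f | ∀ g h : G, f (g * h) = f g + ρ g (f h)}
  zero_mem' := by intro g h; simp
  add_mem' := by
    intro a b ha hb g h
    simp only [Pi.add_apply, ha g h, hb g h, map_add]
    abel
  neg_mem' := by
    intro a ha g h
    simp only [Pi.neg_apply, ha g h, map_neg]
    abel

/-- 1-coboundaries inside the 1-cocycles. -/
def coboundaries (ρ : G →* AddAut M) : AddSubgroup ↥(cocycles ρ) where
  carrier := {f | ∃ m : M, ∀ g : G, (f : G → M) g = ρ g m - m}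
  zero_mem' := ⟨0, by simp⟩
  add_mem' := by
    rintro a b ⟨m, hm⟩ ⟨m', hm'⟩
    refine ⟨m + m', fun g => ?_⟩
    simp only [AddSubgroup.coe_add, Pi.add_apply, hm g, hm' g, map_add]
    abel
  neg_mem' := by
    rintro a ⟨m, hm⟩
    refine ⟨-m, fun g => ?_⟩
    simp only [AddSubgroup.coe_neg, Pi.neg_apply, hm g, map_neg]
    abel

/-- First group cohomology `H¹(G, M)` (cocycles modulo coboundaries). -/
abbrev H1 (ρ : G →* AddAut M) := ↥(cocycles ρ) ⧸ coboundaries ρ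

/-- Restriction of 1-cocycles to a subgroup `H ≤ G`. -/
def resCocycle (ρ : G →* AddAut M) (H : Subgroup G) :
    ↥(cocycles ρ) →+ ↥(cocycles (ρ.comp H.subtype)) where
  toFun f := ⟨fun h => (f : G → M) h, fun g h => f.2 g.1 h.1⟩
  map_zero' := rfl
  map_add' _ _ := rfl

/-- The restriction map `H¹(G, M) → H¹(H, M)`. -/
def resH1 (ρ : G →* AddAut M) (H : Subgroup G) :
    H1 ρ →+ H1 (ρ.comp H.subtype) :=
  QuotientAddGroup.map _ _ (resCocycle ρ H) (by
    rintro f ⟨m, hm⟩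
    exact ⟨m, fun g => hm g.1⟩)

/-- The fine Selmer group attached to the local conditions given by the family of
subgroups `D i` (the decomposition subgroups at the places `i ∈ S`): the kernel of the
localization map `H¹(G, M) → ∏_{i ∈ S} H¹(D i, M)`. -/
def fineSelmer (ρ : G →* AddAut M) {ι : Type*} (D : ι → Subgroup G) :
    AddSubgroup (H1 ρ) :=
  ⨅ i, (resH1 ρ (D i)).ker

/-- The invariants `M^G`. -/
def invar (ρ : G →* AddAut M) : AddSubgroup M where
  carrier := {m | ∀ g, ρ g m = m}
  zero_mem' := fun g => map_zero _
  add_mem' := fun ha hb g => by rw [map_add, ha g, hb g]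
  neg_mem' := fun ha g => by rw [map_neg, ha g]

end Cohomology
/-- The discrete abelian group `ℚ_p/ℤ_p`. -/
abbrev QpZp (p : ℕ) [Fact p.Prime] : Type :=
  ℚ_[p] ⧸ (AddMonoidHom.range (PadicInt.Coe.ringHom (p := p)).toAddMonoidHom)

lemma mem_pTors {p : ℕ} {N : Type*} [AddCommGroup N] {x : N} :
    x ∈ pTors p N ↔ p • x = 0 := Iff.rfl

lemma ker_pMul (p : ℕ) (N : Type*) [AddCommGroup N] : (pMul p N).ker = pTors p N := by
  ext x; rfl

/-- L1: for a finite abelian group, `card (V / pV) = card V[p]`. -/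
lemma card_quot_pMul_eq (p : ℕ) (V : Type*) [AddCommGroup V] [Finite V] :
    Nat.card (V ⧸ (pMul p V).range) = Nat.card (pTors p V) := by
  have h1 : Nat.card V = Nat.card (V ⧸ (pMul p V).range) * Nat.card (pMul p V).range :=
    AddSubgroup.card_eq_card_quotient_mul_card_addSubgroup _
  have h2 : Nat.card (V ⧸ (pMul p V).ker) = Nat.card (pMul p V).range :=
    Nat.card_congr (QuotientAddGroup.quotientKerEquivRange (pMul p V)).toEquiv
  have h3 : Nat.card V = Nat.card (V ⧸ (pMul p V).ker) * Nat.card (pMul p V).ker :=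
    AddSubgroup.card_eq_card_quotient_mul_card_addSubgroup _
  rw [h2, ker_pMul] at h3
  have hpos : 0 < Nat.card (pMul p V).range := Nat.card_pos
  have := h1.symm.trans h3
  -- card(V/pV) * card range = card range * card pTors
  nlinarith [Nat.card_pos (α := (V ⧸ (pMul p V).range)), Nat.card_pos (α := (pTors p V))]

/-- Cardinality of a finite group killed by a prime `p` is a power of `p`,
namely `p ^ pRank`. -/
lemma card_eq_pow_pRank {p : ℕ} (hp : p.Prime) (V : Type*) [AddCommGroup V] [Finite V]
    (hV : ∀ x : V, p • x = 0) : Nat.card V = p ^ pRank p V := by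
  haveI : Fact p.Prime := ⟨hp⟩
  letI : Module (ZMod p) V := AddCommGroup.zmodModule hV
  haveI : Fintype V := Fintype.ofFinite V
  have hcard : Fintype.card V = Fintype.card (ZMod p) ^ Module.finrank (ZMod p) V :=
    Module.card_eq_pow_finrank
  rw [ZMod.card] at hcard
  have htop : pTors p V = ⊤ := by
    rw [eq_top_iff]; intro x _; exact hV x
  have hc : Nat.card V = p ^ Module.finrank (ZMod p) V := by
    rw [Nat.card_eq_fintype_card]; exact hcard
  have : pRank p V = Module.finrank (ZMod p) V := by
    unfold pRank
    rw [htop]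
    rw [Nat.card_congr AddSubgroup.topEquiv.toEquiv, hc, Nat.log_pow hp.one_lt]
  rw [this, ← hc]

lemma pTors_map_le {N : Type*} [AddCommGroup N] (p : ℕ) (W : AddSubgroup N) [Finite (pTors p N)] :
    Nat.card (pTors p ↥W) ≤ Nat.card (pTors p N) := by
  have : Function.Injective (fun x : pTors p ↥W => (⟨(x.1 : N), by
      have hx : p • x.1 = 0 := x.2
      rw [mem_pTors]
      exact_mod_cast congrArg Subtype.val hx⟩ : pTors p N)) := by
    intro a b hab
    have : ((a.1 : ↥W) : N) = ((b.1 : ↥W) : N) := by simpa using congrArg Subtype.val hab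
    apply Subtype.ext; apply Subtype.ext; exact this
  exact Nat.card_le_card_of_injective _ this

/-- L2: for any subgroup `W` of a `p`-primary torsion group `N` with finite `p^m`-torsion
levels, `W/pW` is finite of cardinality at most `card N[p]`. -/
lemma quot_pMul_subgroup_finite_card {p : ℕ} (hp : p.Prime) {N : Type*} [AddCommGroup N]
    (htors : ∀ y : N, ∃ m : ℕ, p ^ m • y = 0)
    (hfin : ∀ m : ℕ, Finite (pTors (p ^ m) N))
    [Finite (pTors p N)] (W : AddSubgroup N) :
    Finite (↥W ⧸ (pMul p ↥W).range) ∧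
      Nat.card (↥W ⧸ (pMul p ↥W).range) ≤ Nat.card (pTors p N) := by
  classical
  set Q := ↥W ⧸ (pMul p ↥W).range with hQ
  set t := Nat.card (pTors p N) + 1 with ht
  have key : ∀ f : Fin t → Q, ¬ Function.Injective f := by
    intro f hf
    -- lift to W
    have hsurj : ∀ i, ∃ w : ↥W, (QuotientAddGroup.mk' (pMul p ↥W).range) w = f i := fun i =>
      QuotientAddGroup.mk'_surjective _ (f i)
    choose w hw using hsurj
    have htors' : ∀ i, ∃ m : ℕ, p ^ m • ((w i : N)) = 0 := fun i => htors _
    choose mi hmi using htors'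
    set m := Finset.univ.sup mi with hm
    set V : AddSubgroup N := W ⊓ pTors (p ^ m) N with hV
    have hwV : ∀ i, (w i : N) ∈ V := by
      intro i
      rw [hV, AddSubgroup.mem_inf]
      refine ⟨(w i).2, ?_⟩
      rw [mem_pTors]
      have hle : mi i ≤ m := Finset.le_sup (Finset.mem_univ i)
      calc p ^ m • (w i : N) = p ^ (m - mi i) • (p ^ (mi i) • (w i : N)) := by
            rw [← mul_smul, ← pow_add, Nat.sub_add_cancel hle]
          _ = 0 := by rw [hmi i, smul_zero]
    haveI : Finite ↥V := by
      haveI := hfin m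
      exact Finite.of_injective (AddSubgroup.inclusion (inf_le_right : V ≤ pTors (p ^ m) N))
        (AddSubgroup.inclusion_injective _)
    set h : ↥V →+ Q :=
      (QuotientAddGroup.mk' (pMul p ↥W).range).comp
        (AddSubgroup.inclusion (inf_le_left : V ≤ W)) with hh
    have hker : (pMul p ↥V).range ≤ h.ker := by
      rintro x ⟨v, rfl⟩
      rw [AddMonoidHom.mem_ker]
      have : pMul p ↥V v = p • v := rfl
      rw [this, map_nsmul]
      have : h v = QuotientAddGroup.mk' (pMul p ↥W).range (AddSubgroup.inclusion inf_le_left v) := rfl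
      rw [this, ← map_nsmul]
      rw [QuotientAddGroup.mk'_apply, QuotientAddGroup.eq_zero_iff]
      exact ⟨AddSubgroup.inclusion inf_le_left v, rfl⟩
    set vi : Fin t → ↥V := fun i => ⟨(w i : N), hwV i⟩ with hvi
    have hhvi : ∀ i, h (vi i) = f i := by
      intro i
      have : AddSubgroup.inclusion (inf_le_left : V ≤ W) (vi i) = w i := rfl
      rw [hh]; simp only [AddMonoidHom.comp_apply, this]; exact hw i
    -- injection Fin t → V ⧸ h.ker
    have hinj2 : Function.Injective (fun i => QuotientAddGroup.mk' h.ker (vi i)) := by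
      intro i j hij
      apply hf
      rw [← hhvi i, ← hhvi j]
      rw [QuotientAddGroup.mk'_eq_mk'] at hij
      obtain ⟨z, hz, hzz⟩ := hij
      rw [AddMonoidHom.mem_ker] at hz
      rw [← hzz, map_add, hz, add_zero]
    haveI : Finite (↥V ⧸ h.ker) := Quotient.finite _
    haveI : Finite (↥V ⧸ (pMul p ↥V).range) := Quotient.finite _
    have h1 : t ≤ Nat.card (↥V ⧸ h.ker) := by
      have := Nat.card_le_card_of_injective _ hinj2
      simpa using this
    have h2 : Nat.card (↥V ⧸ h.ker) ≤ Nat.card (↥V ⧸ (pMul p ↥V).range) := by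
      have hsurj2 : Function.Surjective
          (QuotientAddGroup.map (pMul p ↥V).range h.ker (AddMonoidHom.id _) hker) := by
        intro x
        induction x using QuotientAddGroup.induction_on with
        | H z => exact ⟨QuotientAddGroup.mk' _ z, rfl⟩
      exact Nat.card_le_card_of_surjective _ hsurj2
    have h3 : Nat.card (↥V ⧸ (pMul p ↥V).range) = Nat.card (pTors p ↥V) :=
      card_quot_pMul_eq p ↥V
    have h4 : Nat.card (pTors p ↥V) ≤ Nat.card (pTors p N) := pTors_map_le p V
    omega
  constructor
  · by_contra hQfin
    rw [not_finite_iff_infinite] at hQfin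
    exact key (fun i => (Infinite.natEmbedding Q) i.val)
      (Function.Injective.comp (Infinite.natEmbedding Q).injective
        (fun a b hab => Fin.ext hab))
  · by_contra hcard
    push_neg at hcard
    -- so t ≤ Nat.card Q; but then Q is infinite or has an injection from Fin t
    by_cases hQfin : Finite Q
    · haveI := hQfin
      have e := Finite.equivFin Q
      have : Nat.card Q = Fintype.card (Fin (Nat.card Q)) := by simp
      have hinj : Function.Injective (fun i : Fin t =>
          e.symm (Fin.castLE (by omega : t ≤ Nat.card Q) i)) := by
        intro a b hab
        have := e.symm.injective hab
        exact Fin.castLE_injective _ this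
      exact key _ hinj
    · rw [not_finite_iff_infinite] at hQfin
      exact key (fun i => (Infinite.natEmbedding Q) i.val)
        (Function.Injective.comp (Infinite.natEmbedding Q).injective
          (fun a b hab => Fin.ext hab))



section Maps

variable {G : Type*} [Group G] {M : Type*} [AddCommGroup M] {N : Type*} [AddCommGroup N]

/-- The map on cocycles induced by an equivariant homomorphism. -/
def mapCocycles (ρ : G →* AddAut M) (σ : G →* AddAut N) (e : M →+ N)
    (hequiv : ∀ (g : G) (x : M), e (ρ g x) = σ g (e x)) :
    ↥(cocycles ρ) →+ ↥(cocycles σ) where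
  toFun f := ⟨fun g => e (f.1 g), fun g h => by
    show e (f.1 (g * h)) = e (f.1 g) + σ g (e (f.1 h))
    rw [f.2 g h, map_add, hequiv]⟩
  map_zero' := by apply Subtype.ext; funext g; simp
  map_add' f f' := by apply Subtype.ext; funext g; simp

lemma mapCocycles_coe (ρ : G →* AddAut M) (σ : G →* AddAut N) (e : M →+ N)
    (hequiv : ∀ (g : G) (x : M), e (ρ g x) = σ g (e x)) (f : ↥(cocycles ρ)) (g : G) :
    ((mapCocycles ρ σ e hequiv f : ↥(cocycles σ)) : G → N) g = e (f.1 g) := rfl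

/-- The induced map on `H¹`. -/
def mapH1 (ρ : G →* AddAut M) (σ : G →* AddAut N) (e : M →+ N)
    (hequiv : ∀ (g : G) (x : M), e (ρ g x) = σ g (e x)) :
    H1 ρ →+ H1 σ :=
  QuotientAddGroup.map _ _ (mapCocycles ρ σ e hequiv) (by
    rintro f ⟨m, hm⟩
    refine ⟨e m, fun g => ?_⟩
    rw [mapCocycles_coe, hm g, map_sub, hequiv])

lemma mapH1_mk (ρ : G →* AddAut M) (σ : G →* AddAut N) (e : M →+ N)
    (hequiv : ∀ (g : G) (x : M), e (ρ g x) = σ g (e x)) (f : ↥(cocycles ρ)) :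
    mapH1 ρ σ e hequiv (QuotientAddGroup.mk' _ f) =
      QuotientAddGroup.mk' _ (mapCocycles ρ σ e hequiv f) := rfl

/-- `H¹` with coefficients killed by `p` is killed by `p`. -/
lemma h1_nsmul_eq_zero {p : ℕ} (ρ : G →* AddAut M) (hM : ∀ x : M, p • x = 0) (c : H1 ρ) :
    p • c = 0 := by
  induction c using QuotientAddGroup.induction_on with
  | H f =>
    have h1 : (p • f : ↥(cocycles ρ)) = 0 := by
      apply Subtype.ext; funext g
      have : ((p • f : ↥(cocycles ρ)) : G → M) g = p • (f.1 g) := by simp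
      rw [this, hM]; rfl
    have h2 : ((p • f : ↥(cocycles ρ)) : H1 ρ) = p • (f : H1 ρ) :=
      map_nsmul (QuotientAddGroup.mk' (coboundaries ρ)) p f
    rw [← h2, h1]; rfl

/-- Restriction commutes with the induced map. -/
lemma resH1_mapH1 (ρ : G →* AddAut M) (σ : G →* AddAut N) (e : M →+ N)
    (hequiv : ∀ (g : G) (x : M), e (ρ g x) = σ g (e x)) (H : Subgroup G) (c : H1 ρ) :
    resH1 σ H (mapH1 ρ σ e hequiv c) =
      mapH1 (ρ.comp H.subtype) (σ.comp H.subtype) e (fun g x => hequiv g x)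
        (resH1 ρ H c) := by
  induction c using QuotientAddGroup.induction_on with
  | H f => rfl

end Maps

section KerCoker

variable {G : Type*} [Group G] {M : Type*} [AddCommGroup M] {N : Type*} [AddCommGroup N]

/-- C2: the kernel of `H¹(G,M) → H¹(G,N)` is finite of cardinality at most `card N[p]`. -/
lemma finite_card_ker_mapH1 {p : ℕ} (hp : p.Prime) (ρ : G →* AddAut M) (σ : G →* AddAut N)
    (e : M →+ N) (hinj : Function.Injective e)
    (hequiv : ∀ (g : G) (x : M), e (ρ g x) = σ g (e x))
    (hrange : e.range = pTors p N) (hM : ∀ x : M, p • x = 0)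
    (htors : ∀ y : N, ∃ m : ℕ, p ^ m • y = 0)
    (hfin : ∀ m : ℕ, Finite (pTors (p ^ m) N)) [Finite (pTors p N)] :
    Finite (mapH1 ρ σ e hequiv).ker ∧
      Nat.card (mapH1 ρ σ e hequiv).ker ≤ Nat.card (pTors p N) := by
  classical
  set W : AddSubgroup N := invar σ with hW
  obtain ⟨hWfin, hWcard⟩ := quot_pMul_subgroup_finite_card hp htors hfin W
  haveI := hWfin
  -- choice data for each kernel element
  have key : ∀ k : (mapH1 ρ σ e hequiv).ker,
      ∃ (f : ↥(cocycles ρ)) (m : N), (QuotientAddGroup.mk' (coboundaries ρ)) f = k.1 ∧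
        ∀ g : G, e (f.1 g) = σ g m - m := by
    rintro ⟨c, hc⟩
    obtain ⟨f, hf⟩ := QuotientAddGroup.mk'_surjective (coboundaries ρ) c
    rw [AddMonoidHom.mem_ker, ← hf, mapH1_mk] at hc
    rw [QuotientAddGroup.mk'_apply, QuotientAddGroup.eq_zero_iff] at hc
    obtain ⟨m, hm⟩ := hc
    exact ⟨f, m, hf, fun g => by rw [← hm g]; rfl⟩
  choose ff mm hff hmm using key
  have hmem : ∀ k, p • mm k ∈ W := by
    intro k
    intro g
    have : σ g (p • mm k) - p • mm k = p • (σ g (mm k) - mm k) := by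
      rw [smul_sub, map_nsmul]
    have h2 : σ g (mm k) - mm k = e ((ff k).1 g) := (hmm k g).symm
    have h3 : σ g (p • mm k) - p • mm k = 0 := by
      rw [this, h2, ← map_nsmul, hM, map_zero]
    linear_combination (norm := abel) h3
  set δ : (mapH1 ρ σ e hequiv).ker → (↥W ⧸ (pMul p ↥W).range) :=
    fun k => QuotientAddGroup.mk' _ (⟨p • mm k, hmem k⟩ : ↥W) with hδ
  have hδinj : Function.Injective δ := by
    intro k k' hkk
    rw [hδ] at hkk
    simp only at hkk
    rw [QuotientAddGroup.mk'_eq_mk'] at hkk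
    obtain ⟨z, hz, hzz⟩ := hkk
    obtain ⟨u, hu⟩ := hz
    -- p • mm k + p • u = p • mm k'  (in N)
    have hval : p • mm k + p • (u : N) = p • mm k' := by
      have := congrArg Subtype.val hzz
      have hu' : (z : N) = p • (u : N) := by
        rw [← hu]; simp [pMul]
      simpa [hu'] using this
    set m'' : N := mm k' - mm k - (u : N) with hm''
    have hptors : m'' ∈ pTors p N := by
      rw [mem_pTors, hm'', smul_sub, smul_sub, ← hval]
      abel
    rw [← hrange] at hptors
    obtain ⟨z₀, hz₀⟩ := hptors
    -- show the cocycles differ by a coboundary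
    have hcob : ff k - ff k' ∈ coboundaries ρ := by
      refine ⟨-z₀, fun g => ?_⟩
      apply hinj
      have hcoe : ((ff k - ff k' : ↥(cocycles ρ)) : G → M) g = (ff k).1 g - (ff k').1 g := rfl
      rw [hcoe, map_sub, map_sub, hequiv, map_neg, map_neg, hz₀, hmm k g, hmm k' g, hm'']
      have hu2 : σ g (u : N) = (u : N) := u.2 g
      rw [map_sub, map_sub, hu2]
      abel
    have : (QuotientAddGroup.mk' (coboundaries ρ)) (ff k) =
        (QuotientAddGroup.mk' (coboundaries ρ)) (ff k') := by
      rw [QuotientAddGroup.mk'_apply, QuotientAddGroup.mk'_apply, QuotientAddGroup.eq_iff_sub_mem]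
      exact hcob
    apply Subtype.ext
    rw [← hff k, ← hff k', this]
  exact ⟨Finite.of_injective δ hδinj,
    le_trans (Nat.card_le_card_of_injective δ hδinj) hWcard⟩

/-- C3: the image of `H¹(G,M) → H¹(G,N)` is exactly the `p`-torsion of `H¹(G,N)`. -/
lemma exists_mapH1_preimage {p : ℕ} (ρ : G →* AddAut M) (σ : G →* AddAut N)
    (e : M →+ N) (hinj : Function.Injective e)
    (hequiv : ∀ (g : G) (x : M), e (ρ g x) = σ g (e x))
    (hrange : e.range = pTors p N)
    (hdiv : ∀ y : N, ∃ z : N, p • z = y)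
    (c : H1 σ) (hc : p • c = 0) : ∃ b : H1 ρ, mapH1 ρ σ e hequiv b = c := by
  classical
  obtain ⟨f, hf⟩ := QuotientAddGroup.mk'_surjective (coboundaries σ) c
  have hpf : (QuotientAddGroup.mk' (coboundaries σ)) (p • f) = 0 := by
    rw [map_nsmul, hf, hc]
  rw [QuotientAddGroup.mk'_apply, QuotientAddGroup.eq_zero_iff] at hpf
  obtain ⟨m, hm⟩ := hpf
  obtain ⟨m', hm'⟩ := hdiv m
  have hkey : ∀ g : G, f.1 g - (σ g m' - m') ∈ pTors p N := by
    intro g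
    rw [mem_pTors, smul_sub, smul_sub]
    have h1 : p • f.1 g = σ g m - m := by
      have := hm g
      have hcoe : ((p • f : ↥(cocycles σ)) : G → N) g = p • f.1 g := by simp
      rw [← hcoe]; exact this
    rw [h1, ← hm', ← map_nsmul]
    abel
  have hkey' : ∀ g : G, ∃ x : M, e x = f.1 g - (σ g m' - m') := by
    intro g
    have := hkey g
    rw [← hrange, AddMonoidHom.mem_range] at this
    exact this
  choose zf hzf using hkey'
  have hzcoc : zf ∈ cocycles ρ := by
    intro g h
    apply hinj
    rw [map_add, hzf, hzf, hequiv, hzf, f.2 g h]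
    rw [map_sub, map_sub, map_mul]
    have hmul : (σ g * σ h) m' = σ g (σ h m') := rfl
    rw [hmul]
    abel
  refine ⟨(QuotientAddGroup.mk' (coboundaries ρ)) ⟨zf, hzcoc⟩, ?_⟩
  rw [mapH1_mk, ← hf, QuotientAddGroup.mk'_apply, QuotientAddGroup.mk'_apply]
  rw [QuotientAddGroup.eq_iff_sub_mem]
  refine ⟨-m', fun g => ?_⟩
  have hcoe : ((mapCocycles ρ σ e hequiv ⟨zf, hzcoc⟩ - f : ↥(cocycles σ)) : G → N) g
      = e (zf g) - f.1 g := rfl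
  rw [hcoe, hzf g, map_neg]
  abel

end KerCoker

lemma subgroup_nsmul_eq_zero {A : Type*} [AddCommGroup A] {p : ℕ} (hA : ∀ a : A, p • a = 0)
    (S : AddSubgroup A) (x : ↥S) : p • x = 0 := by
  apply Subtype.ext
  simpa using hA x.1

set_option maxHeartbeats 2000000 in
set_option synthInstance.maxHeartbeats 400000 in
/-- The abstract main bound. -/
theorem main_bound {p : ℕ} (hp : p.Prime) {G : Type*} [Group G] {ι : Type*} [Finite ι]
    (D : ι → Subgroup G) {M : Type*} {N : Type*} [AddCommGroup M] [AddCommGroup N]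
    (ρ : G →* AddAut M) (σ : G →* AddAut N) (e : M →+ N)
    (hinj : Function.Injective e)
    (hequiv : ∀ (g : G) (x : M), e (ρ g x) = σ g (e x))
    (hrange : e.range = pTors p N)
    (hM : ∀ x : M, p • x = 0)
    (hdiv : ∀ y : N, ∃ z, p • z = y)
    (htors : ∀ y : N, ∃ m, p ^ m • y = 0)
    (hfin : ∀ m, Finite (pTors (p ^ m) N))
    (r : ℕ) (hr : Nat.card (pTors p N) ≤ p ^ r) :
    |(pRank p ↥(fineSelmer ρ D) : ℤ) - pRank p ↥(fineSelmer σ D)|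
      ≤ (r : ℤ) + r * Nat.card ι := by
  classical
  haveI hNp : Finite (pTors p N) := by have := hfin 1; rwa [pow_one] at this
  set φ := mapH1 ρ σ e hequiv with hφ
  set X := fineSelmer ρ D with hX
  set Y := fineSelmer σ D with hY
  set φi := fun i => mapH1 (ρ.comp (D i).subtype) (σ.comp (D i).subtype) e
    (fun g x => hequiv g x) with hφi
  have hcomm : ∀ i (c : H1 ρ), resH1 σ (D i) (φ c) = φi i (resH1 ρ (D i) c) :=
    fun i c => resH1_mapH1 ρ σ e hequiv (D i) c
  have hXmem : ∀ c : H1 ρ, c ∈ X ↔ ∀ i, resH1 ρ (D i) c = 0 := by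
    intro c
    simp [hX, fineSelmer, AddSubgroup.mem_iInf, AddMonoidHom.mem_ker]
  have hYmem : ∀ c : H1 σ, c ∈ Y ↔ ∀ i, resH1 σ (D i) c = 0 := by
    intro c
    simp [hY, fineSelmer, AddSubgroup.mem_iInf, AddMonoidHom.mem_ker]
  set Z := Y.comap φ with hZ
  have hXZ : X ≤ Z := by
    intro c hc
    rw [hZ, AddSubgroup.mem_comap, hYmem]
    intro i
    rw [hcomm i c, (hXmem c).1 hc i, map_zero]
  have hH1kill : ∀ c : H1 ρ, p • c = 0 := h1_nsmul_eq_zero ρ hM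
  -- the homomorphism Θ : Z → pTors Y
  have hptors : ∀ z : ↥Z, (⟨φ z.1, z.2⟩ : ↥Y) ∈ pTors p ↥Y := by
    intro z
    rw [mem_pTors]
    apply Subtype.ext
    have h1 : ((p • (⟨φ z.1, z.2⟩ : ↥Y) : ↥Y) : H1 σ) = p • (φ z.1) := by simp
    rw [h1, ← map_nsmul, hH1kill, map_zero]
    rfl
  set Θ : ↥Z →+ ↥(pTors p ↥Y) :=
    { toFun := fun z => ⟨⟨φ z.1, z.2⟩, hptors z⟩
      map_zero' := by apply Subtype.ext; apply Subtype.ext; simp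
      map_add' := by
        intro a b
        apply Subtype.ext; apply Subtype.ext
        simp } with hΘ
  have hΘsurj : Function.Surjective Θ := by
    rintro ⟨⟨c, hcY⟩, hct⟩
    have hc0 : p • c = 0 := by simpa using congrArg Subtype.val hct
    obtain ⟨b, hb⟩ := exists_mapH1_preimage ρ σ e hinj hequiv hrange hdiv c hc0
    have hbZ : b ∈ Z := by rw [hZ, AddSubgroup.mem_comap, hb]; exact hcY
    exact ⟨⟨b, hbZ⟩, by apply Subtype.ext; apply Subtype.ext; exact hb⟩
  -- the kernel of Θ is small
  obtain ⟨hkerfin, hkercard⟩ :=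
    finite_card_ker_mapH1 hp ρ σ e hinj hequiv hrange hM htors hfin
  haveI := hkerfin
  have hmemker : ∀ k : ↥Θ.ker, (k.1.1 : H1 ρ) ∈ φ.ker := by
    rintro ⟨z, hz⟩
    rw [AddMonoidHom.mem_ker] at hz
    rw [AddMonoidHom.mem_ker]
    exact congrArg Subtype.val (congrArg Subtype.val hz)
  have injK : Function.Injective (fun k : ↥Θ.ker => (⟨k.1.1, hmemker k⟩ : ↥φ.ker)) := by
    intro a b hab
    apply Subtype.ext; apply Subtype.ext
    simpa using congrArg Subtype.val hab
  haveI hKfin : Finite ↥Θ.ker := Finite.of_injective _ injK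
  have hKcard : Nat.card ↥Θ.ker ≤ p ^ r :=
    le_trans (Nat.card_le_card_of_injective _ injK) (le_trans hkercard hr)
  -- the localization map lam : Z → ∏ ker φi
  have hYloc : ∀ (z : ↥Z) i, (φi i) (resH1 ρ (D i) z.1) ∈ (⊥ : AddSubgroup _) := by
    intro z i
    rw [AddSubgroup.mem_bot, ← hcomm i z.1]
    have hzY : φ z.1 ∈ Y := z.2
    rw [hYmem] at hzY
    exact hzY i
  have hYloc' : ∀ (z : ↥Z) i, resH1 ρ (D i) z.1 ∈ (φi i).ker := by
    intro z i
    rw [AddMonoidHom.mem_ker]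
    have := hYloc z i
    rwa [AddSubgroup.mem_bot] at this
  set lam : ↥Z →+ (∀ i, ↥((φi i).ker)) :=
    { toFun := fun z => fun i => ⟨resH1 ρ (D i) z.1, hYloc' z i⟩
      map_zero' := by funext i; apply Subtype.ext; simp
      map_add' := by
        intro a b
        funext i
        apply Subtype.ext
        simp } with hlam
  have hlamker : lam.ker = X.addSubgroupOf Z := by
    ext z
    rw [AddMonoidHom.mem_ker, AddSubgroup.mem_addSubgroupOf, hXmem]
    constructor
    · intro h i
      have := congrArg (fun f => (f i : H1 (ρ.comp (D i).subtype))) h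
      simpa [hlam] using this
    · intro h
      funext i
      apply Subtype.ext
      simpa [hlam] using h i
  -- each ker φi is finite and small
  have hφiF : ∀ i, Finite ↥((φi i).ker) ∧ Nat.card ↥((φi i).ker) ≤ Nat.card (pTors p N) :=
    fun i => finite_card_ker_mapH1 hp (ρ.comp (D i).subtype) (σ.comp (D i).subtype) e hinj
      (fun g x => hequiv g x) hrange hM htors hfin
  haveI hφiFin : ∀ i, Finite ↥((φi i).ker) := fun i => (hφiF i).1
  haveI : Finite (∀ i, ↥((φi i).ker)) := Pi.finite
  haveI : Fintype ι := Fintype.ofFinite ι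
  have hPicard : Nat.card (∀ i, ↥((φi i).ker)) ≤ p ^ (r * Nat.card ι) := by
    rw [Nat.card_pi]
    calc ∏ i, Nat.card ↥((φi i).ker) ≤ ∏ _i : ι, p ^ r :=
          Finset.prod_le_prod' (fun i _ => le_trans (hφiF i).2 hr)
      _ = (p ^ r) ^ Fintype.card ι := by rw [Finset.prod_const, Finset.card_univ]
      _ = p ^ (r * Nat.card ι) := by rw [← pow_mul, Nat.card_eq_fintype_card]
  -- case split on finiteness of X
  by_cases hXfin : Finite ↥X
  · -- finite case
    haveI := hXfin
    haveI : Finite ↥(X.addSubgroupOf Z) :=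
      Finite.of_equiv _ (AddSubgroup.addSubgroupOfEquivOfLe hXZ).toEquiv.symm
    haveI : Finite ↥lam.ker := by rw [hlamker]; infer_instance
    haveI : Finite (↥Z ⧸ lam.ker) :=
      Finite.of_equiv _ (QuotientAddGroup.quotientKerEquivRange lam).toEquiv.symm
    haveI : Finite ↥Z :=
      Finite.of_equiv _ (AddSubgroup.addGroupEquivQuotientProdAddSubgroup (s := lam.ker)).symm
    haveI : Finite ↥(pTors p ↥Y) := Finite.of_surjective Θ hΘsurj
    haveI : Finite (↥Z ⧸ Θ.ker) := Quotient.finite _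
    haveI : Nonempty ↥X := ⟨0⟩
    haveI : Nonempty ↥Θ.ker := ⟨0⟩
    haveI : Nonempty ↥(pTors p ↥Y) := ⟨0⟩
    haveI : Nonempty (↥Z ⧸ lam.ker) := ⟨0⟩
    haveI : Nonempty (↥Z ⧸ Θ.ker) := ⟨0⟩
    set x := Nat.card ↥X with hxdef
    set y := Nat.card ↥(pTors p ↥Y) with hydef
    have hZ1 : Nat.card ↥Z = Nat.card (↥Z ⧸ Θ.ker) * Nat.card ↥Θ.ker :=
      AddSubgroup.card_eq_card_quotient_mul_card_addSubgroup _
    have hq1 : Nat.card (↥Z ⧸ Θ.ker) = y :=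
      Nat.card_congr (QuotientAddGroup.quotientKerEquivOfSurjective Θ hΘsurj).toEquiv
    have hZ2 : Nat.card ↥Z = Nat.card (↥Z ⧸ lam.ker) * Nat.card ↥lam.ker :=
      AddSubgroup.card_eq_card_quotient_mul_card_addSubgroup _
    have hq2a : Nat.card ↥lam.ker = x := by
      rw [hlamker]
      exact Nat.card_congr (AddSubgroup.addSubgroupOfEquivOfLe hXZ).toEquiv
    have hq2b : Nat.card (↥Z ⧸ lam.ker) ≤ p ^ (r * Nat.card ι) := by
      have h1 : Nat.card (↥Z ⧸ lam.ker) = Nat.card ↥lam.range :=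
        Nat.card_congr (QuotientAddGroup.quotientKerEquivRange lam).toEquiv
      rw [h1]
      exact le_trans (Nat.card_le_card_of_injective _ Subtype.val_injective) hPicard
    have hxy : x ≤ p ^ r * y := by
      have hx1 : x ≤ Nat.card ↥Z := by
        rw [hZ2, hq2a]
        exact Nat.le_mul_of_pos_left x Nat.card_pos
      calc x ≤ Nat.card ↥Z := hx1
        _ = Nat.card (↥Z ⧸ Θ.ker) * Nat.card ↥Θ.ker := hZ1
        _ = y * Nat.card ↥Θ.ker := by rw [hq1]
        _ ≤ y * p ^ r := Nat.mul_le_mul_left y hKcard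
        _ = p ^ r * y := Nat.mul_comm _ _
    have hyx : y ≤ p ^ (r * Nat.card ι) * x := by
      have hy1 : y ≤ Nat.card ↥Z := by
        rw [hZ1, hq1]
        exact Nat.le_mul_of_pos_right y Nat.card_pos
      calc y ≤ Nat.card ↥Z := hy1
        _ = Nat.card (↥Z ⧸ lam.ker) * x := by rw [hZ2, hq2a]
        _ ≤ p ^ (r * Nat.card ι) * x := Nat.mul_le_mul_right x hq2b
    -- cardinalities are powers of p
    have hXkill : ∀ v : ↥X, p • v = 0 := subgroup_nsmul_eq_zero hH1kill X
    have hYkill : ∀ v : ↥(pTors p ↥Y), p • v = 0 := by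
      intro v
      apply Subtype.ext
      have := v.2
      rw [mem_pTors] at this
      simpa using this
    have hxa : x = p ^ pRank p ↥X := card_eq_pow_pRank hp ↥X hXkill
    have hyb : y = p ^ pRank p ↥(pTors p ↥Y) := card_eq_pow_pRank hp ↥(pTors p ↥Y) hYkill
    set a := pRank p ↥X with hadef
    set b := pRank p ↥(pTors p ↥Y) with hbdef
    -- identify pRank p Y with b
    have hYRank : pRank p ↥Y = b := by
      unfold pRank
      rw [← hydef, hyb, Nat.log_pow hp.one_lt]
    have hab1 : a ≤ r + b := by
      have : p ^ a ≤ p ^ (r + b) := by rw [pow_add, ← hxa, ← hyb]; exact hxy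
      exact (Nat.pow_le_pow_iff_right hp.one_lt).1 this
    have hab2 : b ≤ r * Nat.card ι + a := by
      have : p ^ b ≤ p ^ (r * Nat.card ι + a) := by rw [pow_add, ← hxa, ← hyb]; exact hyx
      exact (Nat.pow_le_pow_iff_right hp.one_lt).1 this
    rw [hYRank]
    set cc := r * Nat.card ι with hcc
    have hcast : (r : ℤ) + (r : ℤ) * (Nat.card ι : ℤ) = ((r + cc : ℕ) : ℤ) := by
      push_cast [hcc]; ring
    rw [hcast, abs_le]
    constructor <;> [skip; skip] <;> omega
  · -- infinite case
    haveI : Infinite ↥X := not_finite_iff_infinite.mp hXfin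
    have hYinf : Infinite ↥(pTors p ↥Y) := by
      by_contra hfinY
      rw [not_infinite_iff_finite] at hfinY
      haveI := hfinY
      haveI : Finite (↥Z ⧸ Θ.ker) :=
        Finite.of_equiv _ (QuotientAddGroup.quotientKerEquivOfSurjective Θ hΘsurj).toEquiv.symm
      haveI : Finite ↥Z :=
        Finite.of_equiv _ (AddSubgroup.addGroupEquivQuotientProdAddSubgroup (s := Θ.ker)).symm
      haveI : Finite ↥X := Finite.of_injective (fun v : ↥X => (⟨v.1, hXZ v.2⟩ : ↥Z))
        (fun v w h => Subtype.ext (by simpa using congrArg Subtype.val h))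
      exact not_finite ↥X
    have h1 : pRank p ↥X = 0 := by
      unfold pRank
      have htop : pTors p ↥X = ⊤ := by
        rw [eq_top_iff]
        intro v _
        exact subgroup_nsmul_eq_zero hH1kill X v
      rw [htop]
      have h2 : Nat.card ↥(⊤ : AddSubgroup ↥X) = Nat.card ↥X :=
        Nat.card_congr AddSubgroup.topEquiv.toEquiv
      rw [h2, Nat.card_eq_zero_of_infinite, Nat.log_zero_right]
    have h2 : pRank p ↥Y = 0 := by
      unfold pRank
      haveI := hYinf
      rw [Nat.card_eq_zero_of_infinite, Nat.log_zero_right]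
    rw [h1, h2]
    simp only [Nat.cast_zero, sub_zero, abs_zero]
    positivity



section QpZpFacts

variable (p : ℕ) [Fact p.Prime]

lemma qpzp_div : ∀ y : QpZp p, ∃ z : QpZp p, p • z = y := by
  have hp : Fact p.Prime := inferInstance
  have hp0 : (p : ℚ_[p]) ≠ 0 := Nat.cast_ne_zero.mpr hp.out.ne_zero
  intro y
  induction y using QuotientAddGroup.induction_on with
  | H q =>
    refine ⟨((q / p : ℚ_[p]) : QpZp p), ?_⟩
    have h1 : (p : ℕ) • ((q / p : ℚ_[p]) : QpZp p) = ((p • (q / p) : ℚ_[p]) : QpZp p) :=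
      (map_nsmul (QuotientAddGroup.mk' _) p (q / p)).symm
    rw [h1]
    congr 1
    rw [nsmul_eq_mul, mul_comm, div_mul_cancel₀ _ hp0]

lemma qpzp_tors : ∀ y : QpZp p, ∃ m : ℕ, p ^ m • y = 0 := by
  have hp : Fact p.Prime := inferInstance
  have hp1 : (1 : ℝ) < p := by exact_mod_cast hp.out.one_lt
  have hppos : (0 : ℝ) < p := lt_trans one_pos hp1
  intro y
  induction y using QuotientAddGroup.induction_on with
  | H q =>
    obtain ⟨m, hm⟩ := pow_unbounded_of_one_lt (‖q‖) hp1
    refine ⟨m, ?_⟩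
    have h1 : (p ^ m : ℕ) • ((q : ℚ_[p]) : QpZp p) = ((p ^ m • q : ℚ_[p]) : QpZp p) :=
      (map_nsmul (QuotientAddGroup.mk' _) (p ^ m) q).symm
    rw [h1, QuotientAddGroup.eq_zero_iff]
    have hnorm : ‖(p ^ m • q : ℚ_[p])‖ ≤ 1 := by
      rw [nsmul_eq_mul, Nat.cast_pow, norm_mul, norm_pow, Padic.norm_p]
      have h2 : ((p : ℝ)⁻¹) ^ m * ‖q‖ ≤ ((p : ℝ)⁻¹) ^ m * (p : ℝ) ^ m := by
        apply mul_le_mul_of_nonneg_left (le_of_lt hm)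
        positivity
      have h3 : ((p : ℝ)⁻¹) ^ m * (p : ℝ) ^ m = 1 := by
        rw [← mul_pow, inv_mul_cancel₀ (ne_of_gt hppos), one_pow]
      linarith
    exact ⟨⟨_, hnorm⟩, rfl⟩

lemma qpzp_tors_finite : ∀ m : ℕ, Finite (pTors (p ^ m) (QpZp p)) := by
  have hp : Fact p.Prime := inferInstance
  intro m
  haveI : NeZero (p ^ m) := ⟨pow_ne_zero m hp.out.ne_zero⟩
  have hpm0 : ((p : ℚ_[p]) ^ m) ≠ 0 :=
    pow_ne_zero m (Nat.cast_ne_zero.mpr hp.out.ne_zero)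
  -- the surjection from ZMod (p ^ m)
  set s : ZMod (p ^ m) → QpZp p :=
    fun k => (((k.val : ℚ_[p]) / (p : ℚ_[p]) ^ m : ℚ_[p]) : QpZp p) with hs
  have hstors : ∀ k, s k ∈ pTors (p ^ m) (QpZp p) := by
    intro k
    rw [mem_pTors]
    have h1 : (p ^ m : ℕ) • s k = (((p ^ m : ℕ) • ((k.val : ℚ_[p]) / (p : ℚ_[p]) ^ m) : ℚ_[p]) : QpZp p) :=
      (map_nsmul (QuotientAddGroup.mk' _) (p ^ m) _).symm
    rw [h1, QuotientAddGroup.eq_zero_iff]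
    have h2 : (p ^ m : ℕ) • ((k.val : ℚ_[p]) / (p : ℚ_[p]) ^ m) = (k.val : ℚ_[p]) := by
      rw [nsmul_eq_mul, Nat.cast_pow, mul_comm, div_mul_cancel₀ _ hpm0]
    rw [h2]
    exact ⟨(k.val : ℤ_[p]), PadicInt.coe_natCast k.val⟩
  have hsurj : ∀ t : ↥(pTors (p ^ m) (QpZp p)), ∃ k, (⟨s k, hstors k⟩ : ↥(pTors (p ^ m) (QpZp p))) = t := by
    rintro ⟨t, ht⟩
    obtain ⟨q, hq⟩ := QuotientAddGroup.mk'_surjective _ t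
    rw [mem_pTors] at ht
    have h1 : (p ^ m : ℕ) • t = (((p ^ m : ℕ) • q : ℚ_[p]) : QpZp p) := by
      rw [← hq]; exact (map_nsmul (QuotientAddGroup.mk' _) (p ^ m) q).symm
    rw [h1, QuotientAddGroup.eq_zero_iff] at ht
    obtain ⟨z, hz⟩ := ht
    -- z : ℤ_[p] with ↑z = p^m • q
    set k := PadicInt.toZModPow m z with hk
    refine ⟨k, Subtype.ext ?_⟩
    show s k = t
    have hq' : t = ((q : ℚ_[p]) : QpZp p) := by rw [← hq]; rfl
    rw [hs, hq']
    show (((k.val : ℚ_[p]) / (p : ℚ_[p]) ^ m : ℚ_[p]) : QpZp p) = ((q : ℚ_[p]) : QpZp p)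
    rw [QuotientAddGroup.eq_iff_sub_mem]
    -- k.val / p^m - q  ∈ H
    have hker : z - (k.val : ℤ_[p]) ∈ RingHom.ker (PadicInt.toZModPow (p := p) m) := by
      rw [RingHom.mem_ker, map_sub, map_natCast, hk]
      rw [ZMod.natCast_rightInverse k]
      exact sub_self _
    rw [PadicInt.ker_toZModPow, Ideal.mem_span_singleton] at hker
    obtain ⟨w, hw⟩ := hker
    refine ⟨-w, ?_⟩
    have hzq : (z : ℚ_[p]) = (p ^ m : ℕ) • q := hz
    have hcast : ((z - (k.val : ℤ_[p]) : ℤ_[p]) : ℚ_[p]) = ((p : ℚ_[p])) ^ m * (w : ℚ_[p]) := by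
      rw [hw]; push_cast; ring
    have hval : (z : ℚ_[p]) - (k.val : ℚ_[p]) = (p : ℚ_[p]) ^ m * (w : ℚ_[p]) := by
      rw [← hcast]; push_cast; ring
    rw [hzq, nsmul_eq_mul, Nat.cast_pow] at hval
    -- so k.val/p^m - q = -w
    show ((-w : ℤ_[p]) : ℚ_[p]) = (k.val : ℚ_[p]) / (p : ℚ_[p]) ^ m - q
    push_cast [ZMod.natCast_val] at hval ⊢
    field_simp
    linear_combination hval
  exact Finite.of_surjective (fun k => (⟨s k, hstors k⟩ : ↥(pTors (p ^ m) (QpZp p))))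
    (fun t => hsurj t)

end QpZpFacts


section PiFacts

variable (p : ℕ) [Fact p.Prime] (d : ℕ)

lemma pi_div : ∀ y : Fin (2 * d) → QpZp p, ∃ z, p • z = y := by
  intro y
  have h := fun i => qpzp_div p (y i)
  choose z hz using h
  refine ⟨z, funext fun i => ?_⟩
  rw [Pi.smul_apply, hz i]

lemma pi_tors : ∀ y : Fin (2 * d) → QpZp p, ∃ m, p ^ m • y = 0 := by
  intro y
  have h := fun i => qpzp_tors p (y i)
  choose mi hmi using h
  refine ⟨Finset.univ.sup mi, funext fun i => ?_⟩
  show p ^ (Finset.univ.sup mi) • y i = 0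
  have hle : mi i ≤ Finset.univ.sup mi := Finset.le_sup (Finset.mem_univ i)
  calc p ^ (Finset.univ.sup mi) • y i
      = p ^ (Finset.univ.sup mi - mi i) • (p ^ (mi i) • y i) := by
        rw [← mul_smul, ← pow_add, Nat.sub_add_cancel hle]
    _ = 0 := by rw [hmi i, smul_zero]

lemma pi_fin : ∀ m, Finite (pTors (p ^ m) (Fin (2 * d) → QpZp p)) := by
  intro m
  haveI := qpzp_tors_finite p m
  apply Finite.of_injective (fun t : ↥(pTors (p ^ m) (Fin (2 * d) → QpZp p)) =>
    (fun i => (⟨t.1 i, by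
      have ht : p ^ m • t.1 = 0 := t.2
      rw [mem_pTors]
      exact congrFun ht i⟩ : ↥(pTors (p ^ m) (QpZp p)))))
  intro a b hab
  apply Subtype.ext
  funext i
  exact congrArg Subtype.val (congrFun hab i)

lemma zmodp_killed : ∀ x : Fin (2 * d) → ZMod p, p • x = 0 := by
  intro x
  funext i
  show p • x i = 0
  have h : (p : ZMod p) = 0 := ZMod.natCast_self p
  rw [nsmul_eq_mul, h, zero_mul]

end PiFacts

/-- Let `F_∞/F` be a `ℤ_p`-extension with layers `F_n` and `A` a
`d`-dimensional abelian variety; `S` contains the places above `p`, the bad-reduction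
places and the archimedean places, and the finite places of `S` decompose finitely in
`F_∞/F`.  Below, for each `n`: `G n` stands for `G_S(F_n)`, `ι n` for `S_f(F_n)`
(of bounded cardinality), `D n i` for the decomposition subgroups, `rhoInf n` for the
action on `A[p^∞] ≅ (ℚ_p/ℤ_p)^{2d}`, `rhoP n` for the action on `A[p] ≅ (ℤ/p)^{2d}`,
and `emb n` for the `G n`-equivariant inclusion `A[p] ↪ A[p^∞]`.  Then
`|r_p(R_S(A[p]/F_n)) − r_p(R(A/F_n))| ≤ 4d + 2d·|S_f(F_n)| = O(1)`. -/
theorem pRank_pFineSelmer_sub_fineSelmer_bounded (p : ℕ) [Fact p.Prime] (hodd : Odd p)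
    (d : ℕ)
    (G : ℕ → Type) [∀ n, Group (G n)]
    (ι : ℕ → Type) [∀ n, Finite (ι n)]
    (D : ∀ n, ι n → Subgroup (G n))
    (rhoInf : ∀ n, G n →* AddAut (Fin (2 * d) → QpZp p))
    (rhoP : ∀ n, G n →* AddAut (Fin (2 * d) → ZMod p))
    (emb : ∀ _ : ℕ, (Fin (2 * d) → ZMod p) →+ (Fin (2 * d) → QpZp p))
    (hinj : ∀ n, Function.Injective (emb n))
    (hequiv : ∀ n (g : G n) x, emb n (rhoP n g x) = rhoInf n g (emb n x))
    (hrange : ∀ n, (emb n).range = pTors p (Fin (2 * d) → QpZp p))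
    (hbd : ∃ B, ∀ n, Nat.card (ι n) ≤ B) :
    (∀ n, |(pRank p ↥(fineSelmer (rhoP n) (D n)) : ℤ)
            - pRank p ↥(fineSelmer (rhoInf n) (D n))|
          ≤ 4 * d + 2 * d * Nat.card (ι n)) ∧
    ∃ Cst : ℕ, ∀ n, |(pRank p ↥(fineSelmer (rhoP n) (D n)) : ℤ)
            - pRank p ↥(fineSelmer (rhoInf n) (D n))| ≤ Cst := by
  have hp : Fact p.Prime := inferInstance
  have key : ∀ n, |(pRank p ↥(fineSelmer (rhoP n) (D n)) : ℤ)
      - pRank p ↥(fineSelmer (rhoInf n) (D n))|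
      ≤ ((2 * d : ℕ) : ℤ) + (2 * d : ℕ) * Nat.card (ι n) := by
    intro n
    have hcard : Nat.card (pTors p (Fin (2 * d) → QpZp p)) ≤ p ^ (2 * d) := by
      have h2 : Nat.card (emb n).range = Nat.card (Fin (2 * d) → ZMod p) :=
        Nat.card_congr (AddMonoidHom.ofInjective (hinj n)).toEquiv.symm
      rw [← hrange n, h2, Nat.card_pi]
      rw [Finset.prod_const, Finset.card_univ, Fintype.card_fin, Nat.card_zmod]
    exact main_bound hp.out (D n) (rhoP n) (rhoInf n) (emb n) (hinj n) (hequiv n)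
      (hrange n) (zmodp_killed p d) (pi_div p d) (pi_tors p d) (pi_fin p d)
      (2 * d) hcard
  have part1 : ∀ n, |(pRank p ↥(fineSelmer (rhoP n) (D n)) : ℤ)
      - pRank p ↥(fineSelmer (rhoInf n) (D n))|
      ≤ 4 * d + 2 * d * Nat.card (ι n) := by
    intro n
    refine le_trans (key n) ?_
    have h0 : (0 : ℤ) ≤ (d : ℤ) := Int.ofNat_nonneg d
    push_cast
    linarith
  refine ⟨part1, ?_⟩
  obtain ⟨B, hB⟩ := hbd
  refine ⟨4 * d + 2 * d * B, fun n => le_trans (part1 n) ?_⟩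
  have h1 : 4 * d + 2 * d * Nat.card (ι n) ≤ 4 * d + 2 * d * B :=
    Nat.add_le_add_left (Nat.mul_le_mul_left (2 * d) (hB n)) (4 * d)
  push_cast
  exact_mod_cast h1
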